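/- On the open set {(x,p) ∈ ℝ² : x ≠ 0}, with the canonical Poisson bracket {f,g} = f_x g_p − f_p g_x, the functions h₁ = 4/x, h₂ = xp, h₃ = (p²x³ + b₀x)/4 (b₀ ∈ ℝ constant) satisfy {h₁,h₂} = −h₁, {h₁,h₃} = −2h₂, {h₂,h₃} = −h₃, so they close an sl(2,ℝ) Lie algebra; moreover the quadratic combination h₁h₃ − h₂² equals the constant b₀. -/

import Mathlib

/-- The canonical Poisson bracket on ℝ² with coordinates (x,p). -/
noncomputable def pb (f g : ℝ → ℝ → ℝ) (x p : ℝ) : ℝ :=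
  deriv (fun x' => f x' p) x * deriv (fun p' => g x p') p -
    deriv (fun p' => f x p') p * deriv (fun x' => g x' p) x

/-- the Kummer–Schwarz Hamiltonians h₁ = 4/x, h₂ = xp,
h₃ = (p²x³ + b₀x)/4 close the sl(2,ℝ) relations {h₁,h₂} = −h₁, {h₁,h₃} = −2h₂,
{h₂,h₃} = −h₃ on x ≠ 0, and moreover h₁h₃ − h₂² = b₀. -/
theorem kummerSchwarz_sl2_relations (b₀ : ℝ) (x p : ℝ) (hx : x ≠ 0) :
    pb (fun x _ => 4 / x) (fun x p => x * p) x p = -(4 / x) ∧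
    pb (fun x _ => 4 / x) (fun x p => (p ^ 2 * x ^ 3 + b₀ * x) / 4) x p =
      -2 * (x * p) ∧
    pb (fun x p => x * p) (fun x p => (p ^ 2 * x ^ 3 + b₀ * x) / 4) x p =
      -((p ^ 2 * x ^ 3 + b₀ * x) / 4) ∧
    (4 / x) * ((p ^ 2 * x ^ 3 + b₀ * x) / 4) - (x * p) ^ 2 = b₀ := by

  have d1 : deriv (fun x' : ℝ => 4 / x') x = -4 / x ^ 2 := by
    rw [show (fun x' : ℝ => 4 / x') = (fun _ : ℝ => (4:ℝ)) / id from rfl,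
      deriv_div (by fun_prop) differentiable_id.differentiableAt hx]
    simp [sq]
  have d2 : deriv (fun x' : ℝ => x' * p) x = p := by
    simpa using deriv_mul_const (differentiableAt_id') p (x := x)
  have d3 : deriv (fun p' : ℝ => x * p') p = x := by
    simpa using deriv_const_mul x (differentiableAt_id' (x := p))
  have d4 : deriv (fun p' : ℝ => (p' ^ 2 * x ^ 3 + b₀ * x) / 4) p
      = 2 * p * x ^ 3 / 4 := by
    rw [deriv_div_const, show (fun p' : ℝ => p' ^ 2 * x ^ 3 + b₀ * x) =
        (fun p' : ℝ => p' ^ 2 * x ^ 3) + (fun _ : ℝ => b₀ * x) from rfl,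
      deriv_add (by fun_prop) (by fun_prop), deriv_const]
    rw [deriv_mul_const (by fun_prop)]
    simp [deriv_pow]
  have d5 : deriv (fun x' : ℝ => (p ^ 2 * x' ^ 3 + b₀ * x') / 4) x
      = (p ^ 2 * (3 * x ^ 2) + b₀) / 4 := by
    rw [deriv_div_const, show (fun x' : ℝ => p ^ 2 * x' ^ 3 + b₀ * x') =
        (fun x' : ℝ => p ^ 2 * x' ^ 3) + (fun x' : ℝ => b₀ * x') from rfl,
      deriv_add (by fun_prop) (by fun_prop)]
    rw [deriv_const_mul _ (by fun_prop), deriv_const_mul _ (by fun_prop)]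
    simp [deriv_pow]
  refine ⟨?_, ?_, ?_, ?_⟩
  · simp only [pb, d1, d2, d3, deriv_const']; field_simp; ring
  · simp only [pb, d1, d4, d5, deriv_const']; field_simp; ring
  · simp only [pb, d2, d3, d4, d5]; field_simp; ring
  · field_simp; ring
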